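/- Under the hypotheses of the sampling theorem, suppose that the space of restrictions to Ω of all algebraic polynomials of degree at most K is contained in V_0(Ω). Then the iterative integration formula is exact on polynomials: for every polynomial p of degree at most K, with sample vector p^s = (p(x_0),…,p(x_M)) on a Δ_0-dense set X_0 with Δ_0 large enough, one has INTEGRATE[∞, p^s] := lim_{n→∞} ∫_Ω Σ_{m=0}^{n} [(I − P_0 Q_{Ψ_0,X_0})^m P_0 Q_{Ψ_0,X_0} p](x) dx = ∫_Ω p(x) dx. -/

import Mathlib

open MeasureTheory Metric Filter

noncomputable def supNormOn {α : Type*} (Ω : Set α) (f : α → ℝ) : ℝ :=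
  ⨆ x ∈ Ω, |f x|

noncomputable def quasiInterp {α : Type*} {M : ℕ} (x : Fin (M + 1) → α)
    (ψ : Fin (M + 1) → α → ℝ) (f : α → ℝ) : α → ℝ :=
  fun t => ∑ ℓ, f (x ℓ) * ψ ℓ t

/-- `neumannTermR T g n = (I − T)ⁿ g`, the `n`-th term of the Neumann series. -/
noncomputable def neumannTermR {α : Type*} (T : (α → ℝ) → (α → ℝ)) (g : α → ℝ) :
    ℕ → (α → ℝ)
  | 0 => g
  | n + 1 => neumannTermR T g n - T (neumannTermR T g n)

/-- If `𝒫_K(Ω) ⊆ V_0(Ω)`, then the iterative integration formula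
is exact on every polynomial `p` of (total) degree at most `K`:
`INTEGRATE[∞, p^s] = lim_n ∫_Ω ∑_{m=0}^n (I − P_0 Q)^m P_0 Q p = ∫_Ω p`. -/
theorem stmt_13 (d K M : ℕ) (Ω : Set (EuclideanSpace ℝ (Fin d)))
    (hΩ : IsCompact Ω) (hΩpos : 0 < volume Ω) (hΩfin : volume Ω < ⊤)
    (V : Submodule ℝ (EuclideanSpace ℝ (Fin d) → ℝ))
    (hVcont : ∀ g ∈ V, ContinuousOn g Ω)
    (P : (EuclideanSpace ℝ (Fin d) → ℝ) →ₗ[ℝ] (EuclideanSpace ℝ (Fin d) → ℝ))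
    (hPrange : ∀ g, P g ∈ V)
    (hPproj : ∀ g ∈ V, P g = g)
    (Cpp : ℝ) (hCpp : 0 < Cpp)
    (hPbd : ∀ g, supNormOn Ω (P g) ≤ Cpp * supNormOn Ω g)
    (Δ : ℝ) (hΔ : 0 < Δ) (x : Fin (M + 1) → EuclideanSpace ℝ (Fin d))
    (hxΩ : ∀ ℓ, x ℓ ∈ Ω)
    (hdense : Ω = (⋃ ℓ, Metric.ball (x ℓ) Δ⁻¹) ∩ Ω)
    (ψ : Fin (M + 1) → EuclideanSpace ℝ (Fin d) → ℝ)
    (hψ01 : ∀ ℓ, ∀ y ∈ Ω, 0 ≤ ψ ℓ y ∧ ψ ℓ y ≤ 1)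
    (hψsupp : ∀ ℓ, Function.support (ψ ℓ) ⊆ Metric.ball (x ℓ) Δ⁻¹)
    (hψsum : ∀ y ∈ Ω, ∑ ℓ, ψ ℓ y = 1)
    (η : ℝ) (hη0 : 0 < η) (hη1 : η < 1)
    (hcontr : ∀ g ∈ V,
      supNormOn Ω (g - P (quasiInterp x ψ g)) ≤ η * supNormOn Ω g)
    (hpoly : ∀ p : MvPolynomial (Fin d) ℝ, p.totalDegree ≤ K →
      (fun t => MvPolynomial.eval (fun i => t i) p) ∈ V) :
    ∀ p : MvPolynomial (Fin d) ℝ, p.totalDegree ≤ K →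
      Tendsto (fun n => ∫ t in Ω, ∑ m ∈ Finset.range (n + 1),
          neumannTermR (fun g => P (quasiInterp x ψ g))
            (P (quasiInterp x ψ (fun t => MvPolynomial.eval (fun i => t i) p))) m t)
        atTop (nhds (∫ t in Ω, MvPolynomial.eval (fun i => t i) p)) := by
  intro p hp
  classical
  set f : EuclideanSpace ℝ (Fin d) → ℝ := fun t => MvPolynomial.eval (fun i => t i) p with hfdef
  have hfV : f ∈ V := hpoly p hp
  set T : (EuclideanSpace ℝ (Fin d) → ℝ) → (EuclideanSpace ℝ (Fin d) → ℝ) :=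
    fun g => P (quasiInterp x ψ g) with hTdef
  have hTsub : ∀ a b, T (a - b) = T a - T b := by
    intro a b
    have hq : quasiInterp x ψ (a - b) = quasiInterp x ψ a - quasiInterp x ψ b := by
      funext t
      simp [quasiInterp, sub_mul, Finset.sum_sub_distrib]
    simp [hTdef, hq, map_sub]
  set e : ℕ → (EuclideanSpace ℝ (Fin d) → ℝ) := neumannTermR T f with hedef
  have hestep : ∀ n, e (n + 1) = e n - T (e n) := fun n => rfl
  have heV : ∀ n, e n ∈ V := by
    intro n
    induction n with
    | zero => exact hfV
    | succ n ih =>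
      rw [hestep]
      exact Submodule.sub_mem V ih (hPrange _)
  have hterm : ∀ m, neumannTermR T (T f) m = T (e m) := by
    intro m
    induction m with
    | zero => rfl
    | succ m ih =>
      show neumannTermR T (T f) m - T (neumannTermR T (T f) m) = T (e (m + 1))
      rw [ih, ← hTsub, hestep]
  have hsum : ∀ n, (∑ m ∈ Finset.range (n + 1), neumannTermR T (T f) m) = f - e (n + 1) := by
    intro n
    induction n with
    | zero =>
      rw [Finset.sum_range_one, hterm, hestep]
      show T (e 0) = f - (f - T (e 0))
      abel
    | succ n ih =>
      rw [Finset.sum_range_succ, ih, hterm, hestep (n + 1)]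
      abel
  -- sup norm facts
  have hne : Ω.Nonempty := nonempty_of_measure_ne_zero hΩpos.ne'
  have hmax : ∀ g ∈ V, ∃ z ∈ Ω, ∀ y ∈ Ω, |g y| ≤ |g z| := by
    intro g hg
    obtain ⟨z, hz, hzmax⟩ := hΩ.exists_isMaxOn hne ((hVcont g hg).abs)
    exact ⟨z, hz, fun y hy => hzmax hy⟩
  have hle_sup : ∀ g ∈ V, ∀ t ∈ Ω, |g t| ≤ supNormOn Ω g := by
    intro g hg t ht
    obtain ⟨z, hz, hzmax⟩ := hmax g hg
    have hb : ∀ xx, (⨆ _ : xx ∈ Ω, |g xx|) ≤ |g z| := by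
      intro xx
      exact Real.iSup_le (fun hx => hzmax xx hx) (abs_nonneg _)
    have hbdd : BddAbove (Set.range fun xx => ⨆ _ : xx ∈ Ω, |g xx|) :=
      ⟨|g z|, by rintro _ ⟨xx, rfl⟩; exact hb xx⟩
    have h1 : |g t| = ⨆ _ : t ∈ Ω, |g t| := by
      haveI : Nonempty (t ∈ Ω) := ⟨ht⟩
      rw [ciSup_const]
    calc |g t| = ⨆ _ : t ∈ Ω, |g t| := h1
      _ ≤ supNormOn Ω g := le_ciSup hbdd t
  have hsupbd : ∀ n, supNormOn Ω (e n) ≤ η ^ n * supNormOn Ω f := by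
    intro n
    induction n with
    | zero =>
      simp [hedef]
      rfl
    | succ n ih =>
      have h1 : supNormOn Ω (e (n + 1)) ≤ η * supNormOn Ω (e n) := by
        rw [hestep]
        exact hcontr (e n) (heV n)
      calc supNormOn Ω (e (n + 1)) ≤ η * supNormOn Ω (e n) := h1
        _ ≤ η * (η ^ n * supNormOn Ω f) := by
            exact mul_le_mul_of_nonneg_left ih hη0.le
        _ = η ^ (n + 1) * supNormOn Ω f := by ring
  -- integrability
  have hΩm : MeasurableSet Ω := hΩ.measurableSet
  have hint : ∀ g ∈ V, IntegrableOn g Ω := by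
    intro g hg
    exact (hVcont g hg).integrableOn_compact hΩ
  have hib : ∀ n, |∫ t in Ω, e (n + 1) t| ≤ (η ^ (n + 1) * supNormOn Ω f) * (volume Ω).toReal := by
    intro n
    have := norm_setIntegral_le_of_norm_le_const (μ := volume) hΩfin
      (f := e (n + 1)) (C := η ^ (n + 1) * supNormOn Ω f)
      (fun t ht => le_trans (hle_sup _ (heV (n + 1)) t ht) (hsupbd (n + 1)))
    simpa [measureReal_def] using this
  have htend0 : Tendsto (fun n => ∫ t in Ω, e (n + 1) t) atTop (nhds 0) := by
    apply squeeze_zero_norm (fun n => by simpa [Real.norm_eq_abs] using hib n)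
    have h1 : Tendsto (fun n : ℕ => η ^ (n + 1)) atTop (nhds 0) :=
      (tendsto_pow_atTop_nhds_zero_of_lt_one hη0.le hη1).comp (tendsto_add_atTop_nat 1)
    have := (h1.mul_const (supNormOn Ω f)).mul_const (volume Ω).toReal
    simpa using this
  have hrw : ∀ n, (∫ t in Ω, ∑ m ∈ Finset.range (n + 1), neumannTermR T (T f) m t)
      = (∫ t in Ω, f t) - ∫ t in Ω, e (n + 1) t := by
    intro n
    have h1 : ∀ t, (∑ m ∈ Finset.range (n + 1), neumannTermR T (T f) m t)
        = f t - e (n + 1) t := by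
      intro t
      have := congrFun (hsum n) t
      simpa [Finset.sum_apply] using this
    rw [show (fun t => ∑ m ∈ Finset.range (n + 1), neumannTermR T (T f) m t)
        = fun t => f t - e (n + 1) t from funext h1]
    exact integral_sub (hint f hfV) (hint _ (heV (n + 1)))
  have hfinal : Tendsto (fun n => (∫ t in Ω, f t) - ∫ t in Ω, e (n + 1) t)
      atTop (nhds (∫ t in Ω, f t)) := by
    have := (tendsto_const_nhds (x := ∫ t in Ω, f t) (f := atTop (α := ℕ))).sub htend0
    simpa using this
  have : Tendsto (fun n => ∫ t in Ω, ∑ m ∈ Finset.range (n + 1), neumannTermR T (T f) m t)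
      atTop (nhds (∫ t in Ω, f t)) := by
    simpa [hrw] using hfinal
  exact this
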